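/- Let U and U' be the 4×4 utility matrices of the lower-bound construction, which differ only in entry (1,1): U(1,1) = 1/2 and U'(1,1) = 1/2 + γ with 0 < γ < 1/4, under the global job ranking w_1 ≻ w_2 ≻ w_3 ≻ w_4. Then under U' the unique weakly stable matching is μ' = {(w_1,a_1),(w_2,a_3),(w_3,a_4),(w_4,a_2)}, giving worker utilities (1/2 + γ, 1/2, 1/4, 0). -/

import Mathlib

/-- The perturbed utility matrix `U'` of the bandit lower-bound construction
(`U'` differs from `U` only in entry `(1,1)`, which is `1/2 + γ`). -/
noncomputable def Uper (γ : ℝ) : Fin 4 → Fin 4 → ℝ :=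
  ![![1/2 + γ, 1/2, 0, 0], ![1/2, 0, 1/2, 0], ![1/2, 0, 0, 1/4], ![0, 0, 1/2, 0]]

/-- Weak stability of a complete matching (a permutation) under the global job
ranking `w_1 ≻ w_2 ≻ w_3 ≻ w_4` and utilities `Uper γ`. -/
def permStable (γ : ℝ) (μ : Equiv.Perm (Fin 4)) : Prop :=
  ¬ ∃ (w a : Fin 4), (w : ℕ) < ((μ.symm a : Fin 4) : ℕ) ∧
      Uper γ w a > Uper γ w (μ w)

/-- The matching `μ' = {(w_1,a_1),(w_2,a_3),(w_3,a_4),(w_4,a_2)}`. -/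
def μper : Equiv.Perm (Fin 4) :=
  ⟨![0, 2, 3, 1], ![0, 3, 1, 2], by decide, by decide⟩

/-- Rank matrix capturing within-row order of `Uper γ` for `0 < γ < 1/4`. -/
def Rk : Fin 4 → Fin 4 → ℕ :=
  ![![2, 1, 0, 0], ![1, 0, 1, 0], ![2, 0, 0, 1], ![0, 0, 1, 0]]

lemma rank_iff (γ : ℝ) (hγ0 : 0 < γ) (w a b : Fin 4) :
    Uper γ w a > Uper γ w b ↔ Rk w a > Rk w b := by
  fin_cases w <;> fin_cases a <;> fin_cases b <;>
    norm_num [Uper, Rk, Matrix.cons_val_zero, Matrix.cons_val_one, Matrix.head_cons,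
      Matrix.cons_val_two, Matrix.cons_val_three, Matrix.tail_cons, Matrix.cons_val_fin_one,
      Matrix.vecHead, Matrix.vecTail] <;> linarith

lemma dec_lemma : ∀ μ : Equiv.Perm (Fin 4),
    (¬ ∃ (w a : Fin 4), (w : ℕ) < ((μ.symm a : Fin 4) : ℕ) ∧ Rk w a > Rk w (μ w)) ↔ μ = μper := by
  decide

theorem stmt_14 (γ : ℝ) (hγ0 : 0 < γ) (hγ : γ < 1 / 4) :
    (∀ μ : Equiv.Perm (Fin 4), permStable γ μ ↔ μ = μper) ∧
    Uper γ 0 (μper 0) = 1 / 2 + γ ∧ Uper γ 1 (μper 1) = 1 / 2 ∧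
    Uper γ 2 (μper 2) = 1 / 4 ∧ Uper γ 3 (μper 3) = 0 := by
  refine ⟨fun μ => ?_, by norm_num [Uper, μper, Equiv.coe_fn_mk], by norm_num [Uper, μper, Equiv.coe_fn_mk, Matrix.cons_val_two, Matrix.cons_val_three, Matrix.vecHead, Matrix.vecTail], by norm_num [Uper, μper, Equiv.coe_fn_mk, Matrix.cons_val_two, Matrix.cons_val_three, Matrix.vecHead, Matrix.vecTail], by norm_num [Uper, μper, Equiv.coe_fn_mk, Matrix.vecHead, Matrix.vecTail, Matrix.cons_val_two, Matrix.cons_val_three]⟩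
  have key : permStable γ μ ↔
      ¬ ∃ (w a : Fin 4), (w : ℕ) < ((μ.symm a : Fin 4) : ℕ) ∧ Rk w a > Rk w (μ w) := by
    unfold permStable
    simp only [rank_iff γ hγ0]
  rw [key]
  exact dec_lemma μ
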